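/- Let ξ = (ξ₁,…,ξ_m) ∈ {0,1}^m be a random vector with mutually independent Bernoulli coordinates, P(ξ_i = 1) = p_i. Let A = (a_{ij}) be an m×m real matrix with a_{ii} = 0 for all i, and set D_max = ‖A‖_∞ + ‖A‖₁. Then for every λ with |λ| ≤ 1/(16 max(‖A‖₁, ‖A‖_∞)): E exp(λ (Σ_{i,j} a_{ij} ξ_i ξ_j − E[Σ_{i,j} a_{ij} ξ_i ξ_j])) ≤ exp(36.5 λ² D_max e^{8|λ|D_max} Σ_{i≠j} |a_{ij}| p_i p_j). -/

import Mathlib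

open MeasureTheory ProbabilityTheory Matrix Finset

/-- Maximum absolute row sum `‖A‖_∞` of an `m × m` real matrix. -/
noncomputable def rowSumNorm {m : ℕ} (A : Matrix (Fin m) (Fin m) ℝ) : ℝ :=
  ⨆ i, ∑ j, |A i j|

/-- Maximum absolute column sum `‖A‖₁` of an `m × m` real matrix. -/
noncomputable def colSumNorm {m : ℕ} (A : Matrix (Fin m) (Fin m) ℝ) : ℝ :=
  ⨆ j, ∑ i, |A i j|


set_option maxHeartbeats 1000000

namespace BQM

/-- weight of a Bernoulli coordinate -/
noncomputable def bwt (p : ℝ) (t : Bool) : ℝ := if t then p else 1 - p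
/-- 0/1 value of a bool -/
def bval (t : Bool) : ℝ := if t then 1 else 0
/-- indicator that a bool is false -/
def bind0 (t : Bool) : ℝ := if t then 0 else 1

@[simp] lemma bval_true : bval true = 1 := rfl
@[simp] lemma bval_false : bval false = 0 := rfl
@[simp] lemma bind0_true : bind0 true = 0 := rfl
@[simp] lemma bind0_false : bind0 false = 1 := rfl
@[simp] lemma bwt_true (p : ℝ) : bwt p true = p := rfl
@[simp] lemma bwt_false (p : ℝ) : bwt p false = 1 - p := rfl

lemma bval_nonneg (t : Bool) : 0 ≤ bval t := by cases t <;> simp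
lemma bval_le_one (t : Bool) : bval t ≤ 1 := by cases t <;> simp [bval]

/-- partial expectation over coordinates in `s`, other coordinates forced to `false` -/
noncomputable def Es {m : ℕ} (p : Fin m → ℝ) (s : Finset (Fin m))
    (g : (Fin m → Bool) → ℝ) : ℝ :=
  ∑ x : Fin m → Bool, ((∏ i ∈ s, bwt (p i) (x i)) * (∏ i ∈ sᶜ, bind0 (x i))) * g x

lemma sum_split {m : ℕ} (k : Fin m) (h : (Fin m → Bool) → ℝ) :
    ∑ x : Fin m → Bool, h x
      = ∑ x : Fin m → Bool,
          (if x k then 0 else h x + h (Function.update x k true)) := by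
  rw [← Finset.sum_filter_add_sum_filter_not Finset.univ (fun x => x k = false)]
  rw [show (∑ x : Fin m → Bool, (if x k then (0:ℝ) else h x + h (Function.update x k true)))
      = ∑ x ∈ Finset.univ.filter (fun x : Fin m → Bool => x k = false),
          (if x k then (0:ℝ) else h x + h (Function.update x k true))
        + ∑ x ∈ Finset.univ.filter (fun x : Fin m → Bool => ¬ x k = false),
          (if x k then (0:ℝ) else h x + h (Function.update x k true)) from
    (Finset.sum_filter_add_sum_filter_not Finset.univ _ _).symm]
  have h2 : ∑ x ∈ Finset.univ.filter (fun x : Fin m → Bool => ¬ x k = false), h x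
      = ∑ x ∈ Finset.univ.filter (fun x : Fin m → Bool => x k = false),
          h (Function.update x k true) := by
    apply Finset.sum_nbij' (i := fun x => Function.update x k false)
      (j := fun x => Function.update x k true)
    · intro a ha; simp
    · intro a ha; simp at ha ⊢
    · intro a ha
      simp only [Finset.mem_filter, Finset.mem_univ, true_and, Bool.not_eq_false] at ha
      funext j
      by_cases hj : j = k
      · subst hj; simp [ha]
      · simp [Function.update_of_ne hj]
    · intro a ha
      simp only [Finset.mem_filter, Finset.mem_univ, true_and] at ha
      funext j
      by_cases hj : j = k
      · subst hj; simp [ha]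
      · simp [Function.update_of_ne hj]
    · intro a ha
      simp only [Finset.mem_filter, Finset.mem_univ, true_and, Bool.not_eq_false] at ha
      congr 1
      funext j
      by_cases hj : j = k
      · subst hj; simp [ha]
      · simp [Function.update_of_ne hj]
  have h3 : ∑ x ∈ Finset.univ.filter (fun x : Fin m → Bool => ¬ x k = false),
      (if x k then (0:ℝ) else h x + h (Function.update x k true)) = 0 := by
    apply Finset.sum_eq_zero
    intro x hx
    simp only [Finset.mem_filter, Finset.mem_univ, true_and, Bool.not_eq_false] at hx
    simp [hx]
  have h1 : ∑ x ∈ Finset.univ.filter (fun x : Fin m → Bool => x k = false),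
      (if x k then (0:ℝ) else h x + h (Function.update x k true))
      = ∑ x ∈ Finset.univ.filter (fun x : Fin m → Bool => x k = false),
          (h x + h (Function.update x k true)) := by
    apply Finset.sum_congr rfl
    intro x hx
    simp only [Finset.mem_filter, Finset.mem_univ, true_and] at hx
    simp [hx]
  rw [h1, h2, h3, Finset.sum_add_distrib]
  ring


lemma Es_empty {m : ℕ} (p : Fin m → ℝ) (g : (Fin m → Bool) → ℝ) :
    Es p ∅ g = g (fun _ => false) := by
  unfold Es
  rw [Finset.sum_eq_single (fun _ => false)]
  · simp [bind0]
  · intro x _ hx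
    have : ∃ i, x i = true := by
      by_contra hc
      push_neg at hc
      exact hx (funext fun i => by simpa using hc i)
    obtain ⟨i, hi⟩ := this
    rw [Finset.prod_eq_zero (Finset.mem_compl.2 (Finset.notMem_empty i)) (by simp [hi, bind0])]
    ring
  · simp

lemma Es_mono {m : ℕ} (p : Fin m → ℝ) (hp0 : ∀ i, 0 ≤ p i) (hp1 : ∀ i, p i ≤ 1)
    (s : Finset (Fin m)) (g g' : (Fin m → Bool) → ℝ) (h : ∀ x, g x ≤ g' x) :
    Es p s g ≤ Es p s g' := by
  apply Finset.sum_le_sum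
  intro x _
  have hw : 0 ≤ (∏ i ∈ s, bwt (p i) (x i)) * (∏ i ∈ sᶜ, bind0 (x i)) := by
    apply mul_nonneg
    · exact Finset.prod_nonneg fun i _ => by
        cases hxi : x i <;> simp [bwt, hp0 i, hp1 i, sub_nonneg]
    · exact Finset.prod_nonneg fun i _ => by cases hxi : x i <;> simp [bind0]
  exact mul_le_mul_of_nonneg_left (h x) hw

lemma Es_peel {m : ℕ} (p : Fin m → ℝ) (s : Finset (Fin m)) (k : Fin m) (hk : k ∈ s)
    (g : (Fin m → Bool) → ℝ) :
    Es p s g = Es p (s.erase k)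
      (fun x => (1 - p k) * g (Function.update x k false) + p k * g (Function.update x k true)) := by
  unfold Es
  rw [sum_split k]
  apply Finset.sum_congr rfl
  intro x _
  cases hxk : x k
  · -- x k = false
    rw [if_neg (by simp [hxk])]
    have hupdx : Function.update x k false = x := by
      funext j; by_cases hj : j = k
      · subst hj; simp [hxk]
      · simp [Function.update_of_ne hj]
    have hcompl : sᶜ = (s.erase k)ᶜ.erase k := by
      rw [Finset.compl_erase, Finset.erase_insert (by simp [hk])]
    have hkc : k ∈ (s.erase k)ᶜ := by simp
    -- products over s split off k
    have hsplitw : ∀ y : Fin m → Bool, (∏ i ∈ s, bwt (p i) (y i))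
        = bwt (p k) (y k) * ∏ i ∈ s.erase k, bwt (p i) (y i) := by
      intro y; rw [← Finset.mul_prod_erase s _ hk]
    have hsplitI : ∀ y : Fin m → Bool, (∏ i ∈ (s.erase k)ᶜ, bind0 (y i))
        = bind0 (y k) * ∏ i ∈ sᶜ, bind0 (y i) := by
      intro y; rw [hcompl, ← Finset.mul_prod_erase _ _ hkc]
    have hupd_erase_w : ∀ t : Bool, (∏ i ∈ s.erase k, bwt (p i) (Function.update x k t i))
        = ∏ i ∈ s.erase k, bwt (p i) (x i) := by
      intro t; apply Finset.prod_congr rfl; intro i hi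
      rw [Function.update_of_ne (Finset.ne_of_mem_erase hi)]
    have hupd_compl : ∀ t : Bool, (∏ i ∈ sᶜ, bind0 (Function.update x k t i))
        = ∏ i ∈ sᶜ, bind0 (x i) := by
      intro t; apply Finset.prod_congr rfl; intro i hi
      rw [Function.update_of_ne (fun he => by subst he; exact (Finset.mem_compl.1 hi) hk)]
    rw [hsplitw x, hsplitw (Function.update x k true), hsplitI x]
    rw [hupd_erase_w true, hupd_compl]
    simp only [hxk, hupdx, Function.update_self]
    simp only [bwt, bind0]
    norm_num
    ring
  · -- x k = true : RHS indicator kills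
    rw [if_pos (by simp [hxk])]
    have : (∏ i ∈ (s.erase k)ᶜ, bind0 (x i)) = 0 := by
      apply Finset.prod_eq_zero (i := k) (by simp)
      simp [hxk, bind0]
    rw [this]
    ring

lemma exp_quad_bound {u : ℝ} (hu : |u| ≤ 1) : Real.exp u - 1 - u ≤ 0.75 * u ^ 2 := by
  have h := Real.exp_bound hu (n := 2) (by norm_num)
  have hs : (∑ m ∈ Finset.range 2, u ^ m / (Nat.factorial m : ℝ)) = 1 + u := by
    simp [Finset.sum_range_succ, Nat.factorial]
  rw [hs] at h
  have := (abs_le.1 h).2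
  have hsq : |u| ^ 2 = u ^ 2 := sq_abs u
  norm_num at this
  nlinarith [this]

lemma bern_mgf_bound {p u : ℝ} (hp : 0 ≤ p) (hu : |u| ≤ 1) :
    1 - p + p * Real.exp u ≤ Real.exp (p * u + 0.75 * (p * u ^ 2)) := by
  have h1 : 1 - p + p * Real.exp u = 1 + p * (Real.exp u - 1) := by ring
  have h2 : p * (Real.exp u - 1) + 1 ≤ Real.exp (p * (Real.exp u - 1)) :=
    Real.add_one_le_exp _
  have h3 : p * (Real.exp u - 1) ≤ p * u + 0.75 * (p * u ^ 2) := by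
    have := exp_quad_bound hu
    nlinarith
  calc 1 - p + p * Real.exp u = p * (Real.exp u - 1) + 1 := by ring
    _ ≤ Real.exp (p * (Real.exp u - 1)) := h2
    _ ≤ _ := Real.exp_le_exp.2 h3


lemma quad_insert {m : ℕ} (A : Fin m → Fin m → ℝ) (k : Fin m) (hAkk : A k k = 0)
    (t : Finset (Fin m)) (hk : k ∉ t) (v : Fin m → ℝ) :
    ∑ i ∈ insert k t, ∑ j ∈ insert k t, A i j * v i * v j
      = (∑ i ∈ t, ∑ j ∈ t, A i j * v i * v j)
        + v k * (∑ j ∈ t, (A k j + A j k) * v j) := by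
  rw [Finset.sum_insert hk, Finset.sum_insert hk]
  rw [Finset.sum_congr rfl (fun i (hi : i ∈ t) =>
    (Finset.sum_insert hk : ∑ j ∈ insert k t, A i j * v i * v j = _))]
  rw [Finset.sum_add_distrib]
  have h1 : ∑ j ∈ t, A k j * v k * v j + ∑ i ∈ t, A i k * v i * v k
      = v k * ∑ j ∈ t, (A k j + A j k) * v j := by
    rw [Finset.mul_sum, ← Finset.sum_add_distrib]
    apply Finset.sum_congr rfl; intro j hj; ring
  simp only [hAkk, zero_mul, zero_add]
  linear_combination h1

lemma pointwise_core (p β r lam D Qt Rt Bt Qpp Rp Lp L Labs : ℝ)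
    (hp0 : 0 ≤ p) (hp1 : p ≤ 1) (hβ0 : 0 ≤ β) (hLabs0 : 0 ≤ Labs)
    (hLLabs : |L| ≤ Labs) (hLabsD : Labs ≤ D)
    (hrD : |r| ≤ D) (hβc : β ≤ 2.25 / 64) (hlD : |lam| * D ≤ 1 / 8) :
    Real.exp (lam * (Qt + Rt - (Qpp + p * Lp + Rp + r * p)) + Bt)
        * (1 - p + p * Real.exp (lam * (L + r) + β))
      ≤ Real.exp (p * β + 2.25 * lam ^ 2 * (p * r ^ 2) + 2.25 * (p * β ^ 2))
        * Real.exp (lam * (Qt + Rt + p * L - (Qpp + Rp + p * Lp))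
            + (Bt + 2.25 * lam ^ 2 * D * (p * Labs))) := by
  set u : ℝ := lam * (L + r) + β with hu_def
  clear_value u
  have hLD : |L| ≤ D := le_trans hLLabs hLabsD
  have hD0 : 0 ≤ D := le_trans (abs_nonneg L) hLD
  have hlL : |lam| * |L| ≤ |lam| * D := mul_le_mul_of_nonneg_left hLD (abs_nonneg lam)
  have hlr : |lam| * |r| ≤ |lam| * D := mul_le_mul_of_nonneg_left hrD (abs_nonneg lam)
  have hu1 : |u| ≤ 1 := by
    have h1 : |u| ≤ |lam * (L + r)| + |β| := by rw [hu_def]; exact abs_add_le _ _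
    have h2 : |lam * (L + r)| = |lam| * |L + r| := abs_mul _ _
    have h3 : |L + r| ≤ |L| + |r| := abs_add_le _ _
    have h4 : |lam| * |L + r| ≤ |lam| * (|L| + |r|) :=
      mul_le_mul_of_nonneg_left h3 (abs_nonneg lam)
    have h5 : |β| = β := abs_of_nonneg hβ0
    have h6 : |lam| * (|L| + |r|) = |lam| * |L| + |lam| * |r| := mul_add _ _ _
    linarith
  have hmgf := bern_mgf_bound hp0 hu1
  have hL2 : L ^ 2 ≤ D * Labs := by nlinarith [sq_abs L, abs_nonneg L]
  have hu2 : u ^ 2 ≤ 3 * (lam ^ 2 * L ^ 2 + lam ^ 2 * r ^ 2 + β ^ 2) := by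
    rw [hu_def]
    nlinarith [sq_nonneg (lam * L - lam * r), sq_nonneg (lam * L - β), sq_nonneg (lam * r - β)]
  have hu2' : u ^ 2 ≤ 3 * (lam ^ 2 * (D * Labs) + lam ^ 2 * r ^ 2 + β ^ 2) := by
    nlinarith [sq_nonneg lam]
  have hpu2 : p * u ^ 2 ≤ p * (3 * (lam ^ 2 * (D * Labs) + lam ^ 2 * r ^ 2 + β ^ 2)) :=
    mul_le_mul_of_nonneg_left hu2' hp0
  calc Real.exp (lam * (Qt + Rt - (Qpp + p * Lp + Rp + r * p)) + Bt)
        * (1 - p + p * Real.exp u)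
      ≤ Real.exp (lam * (Qt + Rt - (Qpp + p * Lp + Rp + r * p)) + Bt)
        * Real.exp (p * u + 0.75 * (p * u ^ 2)) :=
        mul_le_mul_of_nonneg_left hmgf (Real.exp_nonneg _)
    _ = Real.exp ((lam * (Qt + Rt - (Qpp + p * Lp + Rp + r * p)) + Bt)
          + (p * u + 0.75 * (p * u ^ 2))) := (Real.exp_add _ _).symm
    _ ≤ _ := by
        rw [← Real.exp_add, Real.exp_le_exp]
        have hexpand : (p * β + 2.25 * lam ^ 2 * (p * r ^ 2) + 2.25 * (p * β ^ 2))
              + (lam * (Qt + Rt + p * L - (Qpp + Rp + p * Lp))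
                + (Bt + 2.25 * lam ^ 2 * D * (p * Labs)))
              - ((lam * (Qt + Rt - (Qpp + p * Lp + Rp + r * p)) + Bt)
                + (p * u + 0.75 * (p * u ^ 2)))
            = 2.25 * (p * (lam ^ 2 * (D * Labs) + lam ^ 2 * r ^ 2 + β ^ 2))
              - 0.75 * (p * u ^ 2) := by
          rw [hu_def]; ring
        linarith [hpu2, hexpand]
  done

lemma Es_const_mul {m : ℕ} (p : Fin m → ℝ) (s : Finset (Fin m)) (c : ℝ)
    (g : (Fin m → Bool) → ℝ) :
    Es p s (fun x => c * g x) = c * Es p s g := by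
  unfold Es
  rw [Finset.mul_sum]
  apply Finset.sum_congr rfl
  intro x _; ring

lemma main_ind {m : ℕ} (A : Fin m → Fin m → ℝ) (p : Fin m → ℝ) (lam D : ℝ)
    (hp0 : ∀ i, 0 ≤ p i) (hp1 : ∀ i, p i ≤ 1) (hdiag : ∀ i, A i i = 0)
    (hb : ∀ k, (∑ j, |A k j + A j k|) ≤ D)
    (hlD : |lam| * D ≤ 1 / 8) (hD0 : 0 ≤ D) :
    ∀ s : Finset (Fin m), ∀ r β : Fin m → ℝ,
      (∀ j, 0 ≤ β j) →
      (∀ j, |r j| ≤ ∑ k ∈ sᶜ, p k * |A k j + A j k|) →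
      (∀ j, β j ≤ 2.25 * lam ^ 2 * D * ∑ k ∈ sᶜ, p k * |A k j + A j k|) →
      Es p s (fun x => Real.exp (lam * ((∑ i ∈ s, ∑ j ∈ s, A i j * bval (x i) * bval (x j))
          + (∑ j ∈ s, r j * bval (x j))
          - ((∑ i ∈ s, ∑ j ∈ s, A i j * p i * p j) + ∑ j ∈ s, r j * p j))
          + ∑ j ∈ s, β j * bval (x j)))
        ≤ Real.exp (5 * lam ^ 2 * D * ∑ j ∈ s, p j * ∑ k, p k * |A k j + A j k|) := by
  -- global facts
  have hKD : ∀ j, (∑ k, p k * |A k j + A j k|) ≤ D := by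
    intro j
    calc ∑ k, p k * |A k j + A j k| ≤ ∑ k, |A j k + A k j| := by
          apply Finset.sum_le_sum
          intro k _
          have h1 : |A k j + A j k| = |A j k + A k j| := by rw [add_comm]
          rw [h1]
          nlinarith [abs_nonneg (A j k + A k j), hp0 k, hp1 k]
      _ ≤ D := hb j
  have hK0 : ∀ (j : Fin m) (s : Finset (Fin m)), 0 ≤ ∑ k ∈ s, p k * |A k j + A j k| :=
    fun j s => Finset.sum_nonneg fun k _ => mul_nonneg (hp0 k) (abs_nonneg _)
  have hKsub : ∀ (j : Fin m) (s : Finset (Fin m)),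
      (∑ k ∈ s, p k * |A k j + A j k|) ≤ ∑ k, p k * |A k j + A j k| :=
    fun j s => Finset.sum_le_sum_of_subset_of_nonneg (Finset.subset_univ s)
      (fun k _ _ => mul_nonneg (hp0 k) (abs_nonneg _))
  have hlam2D2 : lam ^ 2 * D ^ 2 ≤ 1 / 64 := by
    have h0 : 0 ≤ |lam| * D := mul_nonneg (abs_nonneg lam) hD0
    have h1 : (|lam| * D) * (|lam| * D) ≤ (1 / 8) * (1 / 8) := mul_le_mul hlD hlD h0 (by norm_num)
    have h2 : lam ^ 2 * D ^ 2 = (|lam| * D) * (|lam| * D) := by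
      rw [← sq_abs lam]; ring
    linarith
  intro s
  induction s using Finset.induction_on with
  | empty =>
    intro r β _ _ _
    simp [Es_empty]
  | @insert k t hk ih =>
    intro r β hβ0 hr hβ
    -- set up notation
    have hsc : (insert k t)ᶜ = tᶜ.erase k := by
      rw [Finset.compl_insert]
    have hktc : k ∈ tᶜ := Finset.mem_compl.2 hk
    have hsum_tc : ∀ j, (∑ k' ∈ tᶜ, p k' * |A k' j + A j k'|)
        = p k * |A k j + A j k| + ∑ k' ∈ (insert k t)ᶜ, p k' * |A k' j + A j k'| := by
      intro j
      rw [hsc]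
      exact (Finset.add_sum_erase _ (fun k' => p k' * |A k' j + A j k'|) hktc).symm
    -- bounds for coordinate k
    have hrkK : |r k| ≤ ∑ k', p k' * |A k' k + A k k'| := le_trans (hr k) (hKsub k _)
    have hrkD : |r k| ≤ D := le_trans hrkK (hKD k)
    have hcD : 0 ≤ 2.25 * lam ^ 2 * D := by
      have : (0:ℝ) ≤ 2.25 * lam ^ 2 := by positivity
      exact mul_nonneg this hD0
    have hβkK : β k ≤ 2.25 * lam ^ 2 * D * ∑ k', p k' * |A k' k + A k k'| := by
      refine le_trans (hβ k) ?_
      exact mul_le_mul_of_nonneg_left (hKsub k _) hcD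
    have hβkc : β k ≤ 2.25 / 64 := by
      refine le_trans hβkK ?_
      have h1 : 2.25 * lam ^ 2 * D * (∑ k', p k' * |A k' k + A k k'|) ≤ 2.25 * lam ^ 2 * D * D :=
        mul_le_mul_of_nonneg_left (hKD k) hcD
      linarith [hlam2D2]
    -- new coefficient functions
    set r' : Fin m → ℝ := fun j => r j + p k * (A k j + A j k) with hr'def
    set β' : Fin m → ℝ := fun j => β j + 2.25 * lam ^ 2 * D * (p k * |A k j + A j k|) with hβ'def
    have hβ'0 : ∀ j, 0 ≤ β' j := by
      intro j
      have : 0 ≤ 2.25 * lam ^ 2 * D * (p k * |A k j + A j k|) :=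
        mul_nonneg hcD (mul_nonneg (hp0 k) (abs_nonneg _))
      simp only [hβ'def]
      linarith [hβ0 j]
    have hr' : ∀ j, |r' j| ≤ ∑ k' ∈ tᶜ, p k' * |A k' j + A j k'| := by
      intro j
      rw [hsum_tc j]
      simp only [hr'def]
      refine le_trans (abs_add_le _ _) ?_
      have h2 : |p k * (A k j + A j k)| = p k * |A k j + A j k| := by
        rw [abs_mul, abs_of_nonneg (hp0 k)]
      rw [h2]
      linarith [hr j]
    have hβ' : ∀ j, β' j ≤ 2.25 * lam ^ 2 * D * ∑ k' ∈ tᶜ, p k' * |A k' j + A j k'| := by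
      intro j
      rw [hsum_tc j, mul_add]
      simp only [hβ'def]
      linarith [hβ j]
    -- peel coordinate k
    rw [Es_peel p (insert k t) k (Finset.mem_insert_self k t), Finset.erase_insert hk]
    have hpoint : ∀ x : Fin m → Bool,
        (1 - p k) * Real.exp (lam * ((∑ i ∈ insert k t, ∑ j ∈ insert k t,
              A i j * bval (Function.update x k false i) * bval (Function.update x k false j))
            + (∑ j ∈ insert k t, r j * bval (Function.update x k false j))
            - ((∑ i ∈ insert k t, ∑ j ∈ insert k t, A i j * p i * p j)
              + ∑ j ∈ insert k t, r j * p j))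
            + ∑ j ∈ insert k t, β j * bval (Function.update x k false j))
          + p k * Real.exp (lam * ((∑ i ∈ insert k t, ∑ j ∈ insert k t,
              A i j * bval (Function.update x k true i) * bval (Function.update x k true j))
            + (∑ j ∈ insert k t, r j * bval (Function.update x k true j))
            - ((∑ i ∈ insert k t, ∑ j ∈ insert k t, A i j * p i * p j)
              + ∑ j ∈ insert k t, r j * p j))
            + ∑ j ∈ insert k t, β j * bval (Function.update x k true j))
        ≤ Real.exp (p k * β k + 2.25 * lam ^ 2 * (p k * (r k) ^ 2) + 2.25 * (p k * (β k) ^ 2))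
          * Real.exp (lam * ((∑ i ∈ t, ∑ j ∈ t, A i j * bval (x i) * bval (x j))
            + (∑ j ∈ t, r' j * bval (x j))
            - ((∑ i ∈ t, ∑ j ∈ t, A i j * p i * p j) + ∑ j ∈ t, r' j * p j))
            + ∑ j ∈ t, β' j * bval (x j)) := by
      intro x
      -- abbreviations
      set Qt := ∑ i ∈ t, ∑ j ∈ t, A i j * bval (x i) * bval (x j) with hQt
      set Rt := ∑ j ∈ t, r j * bval (x j) with hRt
      set Bt := ∑ j ∈ t, β j * bval (x j) with hBt
      set Qpp := ∑ i ∈ t, ∑ j ∈ t, A i j * p i * p j with hQpp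
      set Rp := ∑ j ∈ t, r j * p j with hRp
      set Lp := ∑ j ∈ t, (A k j + A j k) * p j with hLp
      set L := ∑ j ∈ t, (A k j + A j k) * bval (x j) with hL
      set Labs := ∑ j ∈ t, |A k j + A j k| * bval (x j) with hLabs
      have hupd : ∀ (c : Bool) (j : Fin m), j ∈ t → Function.update x k c j = x j := by
        intro c j hj
        exact Function.update_of_ne (ne_of_mem_of_not_mem hj hk) c x
      have hg : ∀ c : Bool,
          (lam * ((∑ i ∈ insert k t, ∑ j ∈ insert k t,
              A i j * bval (Function.update x k c i) * bval (Function.update x k c j))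
            + (∑ j ∈ insert k t, r j * bval (Function.update x k c j))
            - ((∑ i ∈ insert k t, ∑ j ∈ insert k t, A i j * p i * p j)
              + ∑ j ∈ insert k t, r j * p j))
            + ∑ j ∈ insert k t, β j * bval (Function.update x k c j))
          = (lam * (Qt + Rt - (Qpp + p k * Lp + Rp + r k * p k)) + Bt)
            + bval c * (lam * (L + r k) + β k) := by
        intro c
        rw [quad_insert A k (hdiag k) t hk (fun j => bval (Function.update x k c j))]
        rw [quad_insert A k (hdiag k) t hk p]
        simp only [Finset.sum_insert hk, Function.update_self]
        have h1 : ∑ i ∈ t, ∑ j ∈ t,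
            A i j * bval (Function.update x k c i) * bval (Function.update x k c j) = Qt := by
          apply Finset.sum_congr rfl; intro i hi
          apply Finset.sum_congr rfl; intro j hj
          rw [hupd c i hi, hupd c j hj]
        have h2 : ∑ j ∈ t, (A k j + A j k) * bval (Function.update x k c j) = L := by
          apply Finset.sum_congr rfl; intro j hj; rw [hupd c j hj]
        have h3 : ∑ j ∈ t, r j * bval (Function.update x k c j) = Rt := by
          apply Finset.sum_congr rfl; intro j hj; rw [hupd c j hj]
        have h4 : ∑ j ∈ t, β j * bval (Function.update x k c j) = Bt := by
          apply Finset.sum_congr rfl; intro j hj; rw [hupd c j hj]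
        rw [h1, h2, h3, h4]
        ring
      rw [hg false, hg true]
      have hfb : ∀ y : ℝ, Real.exp (y + bval false * (lam * (L + r k) + β k)) = Real.exp y := by
        intro y; simp [bval]
      have htb : ∀ y : ℝ, Real.exp (y + bval true * (lam * (L + r k) + β k))
          = Real.exp y * Real.exp (lam * (L + r k) + β k) := by
        intro y; rw [← Real.exp_add]; simp [bval]
      rw [hfb, htb]
      -- bounds for pointwise_core
      have hLabs0 : 0 ≤ Labs :=
        Finset.sum_nonneg fun j _ => mul_nonneg (abs_nonneg _) (bval_nonneg _)
      have hLLabs : |L| ≤ Labs := by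
        refine le_trans (Finset.abs_sum_le_sum_abs _ _) ?_
        apply Finset.sum_le_sum; intro j hj
        rw [abs_mul, abs_of_nonneg (bval_nonneg _)]
      have hLabsD : Labs ≤ D := by
        calc Labs ≤ ∑ j ∈ t, |A k j + A j k| := by
              apply Finset.sum_le_sum; intro j hj
              exact mul_le_of_le_one_right (abs_nonneg _) (bval_le_one _)
          _ ≤ ∑ j, |A k j + A j k| :=
              Finset.sum_le_sum_of_subset_of_nonneg (Finset.subset_univ t)
                (fun j _ _ => abs_nonneg _)
          _ ≤ D := hb k
      have hcore := pointwise_core (p k) (β k) (r k) lam D Qt Rt Bt Qpp Rp Lp L Labs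
        (hp0 k) (hp1 k) (hβ0 k) hLabs0 hLLabs hLabsD hrkD hβkc hlD
      refine le_trans (by linarith [hcore] : _ ≤ Real.exp (p k * β k
          + 2.25 * lam ^ 2 * (p k * (r k) ^ 2) + 2.25 * (p k * (β k) ^ 2))
          * Real.exp (lam * (Qt + Rt + p k * L - (Qpp + Rp + p k * Lp))
            + (Bt + 2.25 * lam ^ 2 * D * (p k * Labs)))) ?_
      -- rewrite the target exponent
      have hr's : ∑ j ∈ t, r' j * bval (x j) = Rt + p k * L := by
        rw [hRt, hL, Finset.mul_sum, ← Finset.sum_add_distrib]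
        apply Finset.sum_congr rfl; intro j hj; simp only [hr'def]; ring
      have hr'p : ∑ j ∈ t, r' j * p j = Rp + p k * Lp := by
        rw [hRp, hLp, Finset.mul_sum, ← Finset.sum_add_distrib]
        apply Finset.sum_congr rfl; intro j hj; simp only [hr'def]; ring
      have hβ's : ∑ j ∈ t, β' j * bval (x j) = Bt + 2.25 * lam ^ 2 * D * (p k * Labs) := by
        rw [hBt, hLabs, Finset.mul_sum, Finset.mul_sum, ← Finset.sum_add_distrib]
        apply Finset.sum_congr rfl; intro j hj; simp only [hβ'def]; ring
      rw [hr's, hr'p, hβ's]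
      apply le_of_eq
      congr 1
      ring
    refine le_trans (Es_mono p hp0 hp1 t _ _ hpoint) ?_
    rw [Es_const_mul]
    have hih := ih r' β' hβ'0 hr' hβ'
    have hexp0 : (0:ℝ) ≤ Real.exp (p k * β k + 2.25 * lam ^ 2 * (p k * (r k) ^ 2)
        + 2.25 * (p k * (β k) ^ 2)) := Real.exp_nonneg _
    refine le_trans (mul_le_mul_of_nonneg_left hih hexp0) ?_
    rw [← Real.exp_add, Real.exp_le_exp, Finset.sum_insert hk]
    -- budget arithmetic
    have hKk0 : 0 ≤ ∑ k', p k' * |A k' k + A k k'| := hK0 k Finset.univ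
    have h1 : p k * β k ≤ p k * (2.25 * lam ^ 2 * D * ∑ k', p k' * |A k' k + A k k'|) :=
      mul_le_mul_of_nonneg_left hβkK (hp0 k)
    have h2 : (r k) ^ 2 ≤ D * ∑ k', p k' * |A k' k + A k k'| := by
      nlinarith [sq_abs (r k), hrkK, hrkD, hKk0, hD0, abs_nonneg (r k)]
    have h2' : 2.25 * lam ^ 2 * (p k * (r k) ^ 2)
        ≤ 2.25 * lam ^ 2 * (p k * (D * ∑ k', p k' * |A k' k + A k k'|)) := by
      have : p k * (r k) ^ 2 ≤ p k * (D * ∑ k', p k' * |A k' k + A k k'|) :=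
        mul_le_mul_of_nonneg_left h2 (hp0 k)
      have h0 : (0:ℝ) ≤ 2.25 * lam ^ 2 := by positivity
      exact mul_le_mul_of_nonneg_left this h0
    have h3 : (β k) ^ 2 ≤ (2.25 / 64) * (2.25 * lam ^ 2 * D * ∑ k', p k' * |A k' k + A k k'|) := by
      nlinarith [hβ0 k, hβkc, hβkK]
    have h3' : 2.25 * (p k * (β k) ^ 2)
        ≤ 2.25 * (p k * ((2.25 / 64) * (2.25 * lam ^ 2 * D * ∑ k', p k' * |A k' k + A k k'|))) := by
      have : p k * (β k) ^ 2 ≤ p k * ((2.25 / 64) * (2.25 * lam ^ 2 * D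
          * ∑ k', p k' * |A k' k + A k k'|)) := mul_le_mul_of_nonneg_left h3 (hp0 k)
      linarith
    have hpKk : 0 ≤ p k * ∑ k', p k' * |A k' k + A k k'| := mul_nonneg (hp0 k) hKk0
    have hfinal : p k * β k + 2.25 * lam ^ 2 * (p k * (r k) ^ 2) + 2.25 * (p k * (β k) ^ 2)
        ≤ 5 * lam ^ 2 * D * (p k * ∑ k', p k' * |A k' k + A k k'|) := by
      have hmono : 0 ≤ lam ^ 2 * D * (p k * ∑ k', p k' * |A k' k + A k k'|) := by
        have : (0:ℝ) ≤ lam ^ 2 := sq_nonneg lam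
        exact mul_nonneg (mul_nonneg this hD0) hpKk
      nlinarith [h1, h2', h3']
    linarith [hfinal]

variable {m : ℕ} {Ω : Type} [mΩ : MeasurableSpace Ω] {μ : MeasureTheory.Measure Ω}

/-- one-coordinate matching factor -/
def bchi (c : Bool) (t : ℝ) : ℝ := if c then t else 1 - t

variable {m : ℕ} {Ω : Type} [mΩ : MeasurableSpace Ω] {μ : Measure Ω}

lemma sum_match (tv : Fin m → ℝ) (htv : ∀ i, tv i = 0 ∨ tv i = 1)
    (G : (Fin m → Bool) → ℝ) :
    ∑ x : Fin m → Bool, (∏ i, bchi (x i) (tv i)) * G x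
      = G (fun i => decide (tv i = 1)) := by
  rw [Finset.sum_eq_single (fun i => decide (tv i = 1))]
  · have : (∏ i, bchi (decide (tv i = 1)) (tv i)) = 1 := by
      apply Finset.prod_eq_one
      intro i _
      rcases htv i with h | h <;> simp [h, bchi]
    rw [this, one_mul]
  · intro x _ hx
    have : ∃ i, x i ≠ decide (tv i = 1) := by
      by_contra hc
      push_neg at hc
      exact hx (funext hc)
    obtain ⟨i, hi⟩ := this
    have : bchi (x i) (tv i) = 0 := by
      rcases htv i with h | h <;> cases hxi : x i <;>
        simp [h, hxi, bchi] at hi ⊢ <;> simp_all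
    rw [Finset.prod_eq_zero (Finset.mem_univ i) this, zero_mul]
  · simp

lemma bchi_bounds {ξ : Fin m → Ω → ℝ} (hval : ∀ i ω, ξ i ω = 0 ∨ ξ i ω = 1)
    (c : Bool) (i : Fin m) (ω : Ω) : 0 ≤ bchi c (ξ i ω) ∧ bchi c (ξ i ω) ≤ 1 := by
  rcases hval i ω with h | h <;> cases c <;> simp [bchi, h]

lemma integral_xi [IsProbabilityMeasure μ] {ξ : Fin m → Ω → ℝ}
    (hmeas : ∀ i, Measurable (ξ i)) (hval : ∀ i ω, ξ i ω = 0 ∨ ξ i ω = 1)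
    {p : Fin m → ℝ} (hp0 : ∀ i, 0 ≤ p i)
    (hprob : ∀ i, μ {ω | ξ i ω = 1} = ENNReal.ofReal (p i)) (i : Fin m) :
    ∫ ω, ξ i ω ∂μ = p i := by
  have hset : MeasurableSet {ω | ξ i ω = 1} := hmeas i (measurableSet_singleton 1)
  have heq : (fun ω => ξ i ω) = Set.indicator {ω | ξ i ω = 1} (fun _ => (1:ℝ)) := by
    funext ω
    rcases hval i ω with h | h
    · rw [h, Set.indicator_apply, if_neg]
      simp [h]
    · rw [h, Set.indicator_apply, if_pos]
      exact h
  rw [heq,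
    show ({ω | ξ i ω = 1}.indicator fun _ => (1:ℝ)) = ({ω | ξ i ω = 1}.indicator (1 : Ω → ℝ))
      from rfl,
    integral_indicator_one hset, measureReal_def, hprob i, ENNReal.toReal_ofReal (hp0 i)]

lemma integrable_xi [IsProbabilityMeasure μ] {ξ : Fin m → Ω → ℝ}
    (hmeas : ∀ i, Measurable (ξ i)) (hval : ∀ i ω, ξ i ω = 0 ∨ ξ i ω = 1) (i : Fin m) :
    Integrable (ξ i) μ := by
  refine ⟨(hmeas i).aestronglyMeasurable, ?_⟩
  apply HasFiniteIntegral.of_bounded (C := 1)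
  apply ae_of_all
  intro ω
  rcases hval i ω with h | h <;> simp [h]

lemma integral_bchi [IsProbabilityMeasure μ] {ξ : Fin m → Ω → ℝ}
    (hmeas : ∀ i, Measurable (ξ i)) (hval : ∀ i ω, ξ i ω = 0 ∨ ξ i ω = 1)
    {p : Fin m → ℝ} (hp0 : ∀ i, 0 ≤ p i) (hp1 : ∀ i, p i ≤ 1)
    (hprob : ∀ i, μ {ω | ξ i ω = 1} = ENNReal.ofReal (p i)) (i : Fin m) (c : Bool) :
    ∫ ω, bchi c (ξ i ω) ∂μ = bwt (p i) c := by
  cases c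
  · simp only [bchi, if_neg Bool.false_ne_true, bwt]
    rw [integral_sub (integrable_const 1) (integrable_xi hmeas hval i)]
    rw [integral_const, integral_xi hmeas hval hp0 hprob i]
    simp
  · simp only [bchi, bwt, if_pos]
    exact integral_xi hmeas hval hp0 hprob i

lemma integral_prod_bchi [IsProbabilityMeasure μ] {ξ : Fin m → Ω → ℝ}
    (hmeas : ∀ i, Measurable (ξ i)) (hval : ∀ i ω, ξ i ω = 0 ∨ ξ i ω = 1)
    (hindep : iIndepFun ξ μ) (x : Fin m → Bool) :
    ∫ ω, ∏ i, bchi (x i) (ξ i ω) ∂μ = ∏ i, ∫ ω, bchi (x i) (ξ i ω) ∂μ := by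
  have hbm : ∀ c : Bool, Measurable (bchi c) := by
    intro c; cases c
    · rw [show bchi false = fun t : ℝ => 1 - t from funext fun t => by simp [bchi]]; exact measurable_const.sub measurable_id
    · rw [show bchi true = fun t : ℝ => t from funext fun t => by simp [bchi]]; exact measurable_id
  have hcomp : iIndepFun (fun i => bchi (x i) ∘ ξ i) μ :=
    hindep.comp (fun i => bchi (x i)) (fun i => hbm (x i))
  have hmc : ∀ i, Measurable (bchi (x i) ∘ ξ i) := fun i => (hbm (x i)).comp (hmeas i)
  have key : ∀ s : Finset (Fin m),
      ∫ ω, ∏ i ∈ s, bchi (x i) (ξ i ω) ∂μ = ∏ i ∈ s, ∫ ω, bchi (x i) (ξ i ω) ∂μ := by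
    intro s
    induction s using Finset.induction_on with
    | empty => simp
    | @insert k s hk ih =>
      have hI : IndepFun (∏ j ∈ s, (bchi (x j) ∘ ξ j)) (bchi (x k) ∘ ξ k) μ :=
        hcomp.indepFun_finsetProd_of_notMem hmc hk
      have hprodmeas : Measurable (∏ j ∈ s, (bchi (x j) ∘ ξ j)) := by
        have hfn : (∏ j ∈ s, (bchi (x j) ∘ ξ j))
            = fun ω => ∏ j ∈ s, bchi (x j) (ξ j ω) := by
          funext ω; rw [Finset.prod_apply]; rfl
        rw [hfn]
        exact Finset.measurable_prod s (fun j _ => hmc j)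
      have h2 := hI.integral_mul_eq_mul_integral hprodmeas.aestronglyMeasurable (hmc k).aestronglyMeasurable
      have h3 : ∫ ω, ∏ i ∈ insert k s, bchi (x i) (ξ i ω) ∂μ
          = ∫ ω, (∏ j ∈ s, (bchi (x j) ∘ ξ j)) ω * (bchi (x k) ∘ ξ k) ω ∂μ := by
        apply integral_congr_ae; apply ae_of_all; intro ω
        simp only [Finset.prod_insert hk, Finset.prod_apply, Function.comp_apply]
        ring
      rw [h3]
      have h4 : ∫ ω, (∏ j ∈ s, (bchi (x j) ∘ ξ j)) ω * (bchi (x k) ∘ ξ k) ω ∂μ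
          = (∫ ω, (∏ j ∈ s, (bchi (x j) ∘ ξ j)) ω ∂μ) * ∫ ω, (bchi (x k) ∘ ξ k) ω ∂μ := h2
      rw [h4, Finset.prod_insert hk]
      have h5 : ∫ ω, (∏ j ∈ s, (bchi (x j) ∘ ξ j)) ω ∂μ = ∏ i ∈ s, ∫ ω, bchi (x i) (ξ i ω) ∂μ := by
        rw [← ih]
        apply integral_congr_ae; apply ae_of_all; intro ω
        simp only [Finset.prod_apply, Function.comp_apply]
      rw [h5]
      simp only [Function.comp_apply]
      ring
  exact key Finset.univ

lemma integral_eq_sum [IsProbabilityMeasure μ] {ξ : Fin m → Ω → ℝ}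
    (hmeas : ∀ i, Measurable (ξ i)) (hval : ∀ i ω, ξ i ω = 0 ∨ ξ i ω = 1)
    {p : Fin m → ℝ} (hp0 : ∀ i, 0 ≤ p i) (hp1 : ∀ i, p i ≤ 1)
    (hprob : ∀ i, μ {ω | ξ i ω = 1} = ENNReal.ofReal (p i))
    (hindep : iIndepFun ξ μ)
    (G : (Fin m → Bool) → ℝ) :
    ∫ ω, G (fun i => decide (ξ i ω = 1)) ∂μ
      = ∑ x : Fin m → Bool, (∏ i, bwt (p i) (x i)) * G x := by
  have hpt : (fun ω => G (fun i => decide (ξ i ω = 1)))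
      = fun ω => ∑ x : Fin m → Bool, (∏ i, bchi (x i) (ξ i ω)) * G x := by
    funext ω
    exact (sum_match (fun i => ξ i ω) (fun i => hval i ω) G).symm
  rw [hpt]
  have hint : ∀ x : Fin m → Bool,
      Integrable (fun ω => (∏ i, bchi (x i) (ξ i ω)) * G x) μ := by
    intro x
    apply Integrable.mul_const
    refine ⟨?_, ?_⟩
    · apply Measurable.aestronglyMeasurable
      apply Finset.measurable_prod
      intro i _
      have hbm : Measurable (bchi (x i)) := by
        cases hxi : x i
        · rw [show bchi false = fun t : ℝ => 1 - t from funext fun t => by simp [bchi]]; exact measurable_const.sub measurable_id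
        · rw [show bchi true = fun t : ℝ => t from funext fun t => by simp [bchi]]; exact measurable_id
      exact hbm.comp (hmeas i)
    · apply HasFiniteIntegral.of_bounded (C := 1)
      apply ae_of_all
      intro ω
      have h0 : 0 ≤ ∏ i, bchi (x i) (ξ i ω) :=
        Finset.prod_nonneg fun i _ => (bchi_bounds hval (x i) i ω).1
      have h1 : (∏ i, bchi (x i) (ξ i ω)) ≤ 1 :=
        Finset.prod_le_one (fun i _ => (bchi_bounds hval (x i) i ω).1)
          (fun i _ => (bchi_bounds hval (x i) i ω).2)
      rw [Real.norm_eq_abs, abs_of_nonneg h0]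
      exact h1
  rw [integral_finset_sum _ (fun x _ => hint x)]
  apply Finset.sum_congr rfl
  intro x _
  rw [integral_mul_const]
  rw [integral_prod_bchi hmeas hval hindep x]
  congr 1
  apply Finset.prod_congr rfl
  intro i _
  exact integral_bchi hmeas hval hp0 hp1 hprob i (x i)


lemma Es_univ {m : ℕ} (p : Fin m → ℝ) (g : (Fin m → Bool) → ℝ) :
    Es p Finset.univ g = ∑ x : Fin m → Bool, (∏ i, bwt (p i) (x i)) * g x := by
  unfold Es
  apply Finset.sum_congr rfl
  intro x _
  rw [Finset.compl_univ, Finset.prod_empty, mul_one]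

lemma EZ [IsProbabilityMeasure μ] {ξ : Fin m → Ω → ℝ}
    (hmeas : ∀ i, Measurable (ξ i)) (hval : ∀ i ω, ξ i ω = 0 ∨ ξ i ω = 1)
    {p : Fin m → ℝ} (hp0 : ∀ i, 0 ≤ p i)
    (hprob : ∀ i, μ {ω | ξ i ω = 1} = ENNReal.ofReal (p i))
    (hindep : iIndepFun ξ μ)
    (A : Fin m → Fin m → ℝ) (hdiag : ∀ i, A i i = 0) :
    ∫ ω, (∑ i, ∑ j, A i j * ξ i ω * ξ j ω) ∂μ = ∑ i, ∑ j, A i j * p i * p j := by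
  have hterm : ∀ i j : Fin m, Integrable (fun ω => A i j * ξ i ω * ξ j ω) μ := by
    intro i j
    refine ⟨((measurable_const.mul (hmeas i)).mul (hmeas j)).aestronglyMeasurable, ?_⟩
    apply HasFiniteIntegral.of_bounded (C := |A i j|)
    apply ae_of_all
    intro ω
    rcases hval i ω with h | h <;> rcases hval j ω with h' | h' <;>
      simp [h, h', abs_nonneg]
  rw [integral_finset_sum _ (fun i _ => integrable_finset_sum _ (fun j _ => hterm i j))]
  apply Finset.sum_congr rfl
  intro i _
  rw [integral_finset_sum _ (fun j _ => hterm i j)]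
  apply Finset.sum_congr rfl
  intro j _
  by_cases hij : i = j
  · subst hij
    simp [hdiag i]
  · have hfe : (fun ω => A i j * ξ i ω * ξ j ω) = fun ω => A i j * (ξ i ω * ξ j ω) := by
      funext ω; ring
    rw [hfe, integral_const_mul]
    have hI := (hindep.indepFun hij).integral_mul_eq_mul_integral
      (hmeas i).aestronglyMeasurable (hmeas j).aestronglyMeasurable
    have : ∫ ω, ξ i ω * ξ j ω ∂μ = (∫ ω, ξ i ω ∂μ) * ∫ ω, ξ j ω ∂μ := hI
    rw [this, integral_xi hmeas hval hp0 hprob i, integral_xi hmeas hval hp0 hprob j]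
    ring

end BQM

open BQM in
theorem bernoulli_quadratic_mgf_offdiag
    (m : ℕ) (hm : 0 < m)
    (Ω : Type) (mΩ : MeasurableSpace Ω) (μ : Measure Ω)
    (hμ : IsProbabilityMeasure μ)
    (ξ : Fin m → Ω → ℝ)
    (hmeas : ∀ i, Measurable (ξ i))
    (hval : ∀ i ω, ξ i ω = 0 ∨ ξ i ω = 1)
    (p : Fin m → ℝ) (hp0 : ∀ i, 0 ≤ p i) (hp1 : ∀ i, p i ≤ 1)
    (hprob : ∀ i, μ {ω | ξ i ω = 1} = ENNReal.ofReal (p i))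
    (hindep : iIndepFun ξ μ)
    (A : Matrix (Fin m) (Fin m) ℝ)
    (hdiag : ∀ i, A i i = 0)
    (lam : ℝ)
    (hlam : |lam| ≤ 1 / (16 * max (colSumNorm A) (rowSumNorm A))) :
    (∫ ω, Real.exp (lam *
        ((∑ i, ∑ j, A i j * ξ i ω * ξ j ω) -
          ∫ ω', (∑ i, ∑ j, A i j * ξ i ω' * ξ j ω') ∂μ)) ∂μ) ≤
      Real.exp (36.5 * lam ^ 2 * (rowSumNorm A + colSumNorm A) *
        Real.exp (8 * |lam| * (rowSumNorm A + colSumNorm A)) *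
        ∑ i, ∑ j, if i = j then 0 else |A i j| * p i * p j) := by
  classical
  set D : ℝ := rowSumNorm A + colSumNorm A with hD
  -- norm facts
  have hrow_le : ∀ i, (∑ j, |A i j|) ≤ rowSumNorm A := by
    intro i
    exact le_ciSup (f := fun i : Fin m => ∑ j, |A i j|)
      (Set.Finite.bddAbove (Set.finite_range _)) i
  have hcol_le : ∀ j, (∑ i, |A i j|) ≤ colSumNorm A := by
    intro j
    exact le_ciSup (f := fun j : Fin m => ∑ i, |A i j|)
      (Set.Finite.bddAbove (Set.finite_range _)) j
  have hrow0 : 0 ≤ rowSumNorm A := by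
    obtain ⟨i⟩ := Fin.pos_iff_nonempty.mp hm
    exact le_trans (Finset.sum_nonneg fun j _ => abs_nonneg _) (hrow_le i)
  have hcol0 : 0 ≤ colSumNorm A := by
    obtain ⟨j⟩ := Fin.pos_iff_nonempty.mp hm
    exact le_trans (Finset.sum_nonneg fun i _ => abs_nonneg _) (hcol_le j)
  have hD0 : 0 ≤ D := by rw [hD]; linarith
  have hb : ∀ k, (∑ j, |A k j + A j k|) ≤ D := by
    intro k
    calc ∑ j, |A k j + A j k| ≤ ∑ j, (|A k j| + |A j k|) :=
          Finset.sum_le_sum fun j _ => abs_add_le _ _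
      _ = (∑ j, |A k j|) + ∑ j, |A j k| := Finset.sum_add_distrib
      _ ≤ rowSumNorm A + colSumNorm A := add_le_add (hrow_le k) (hcol_le k)
  -- |lam| * D ≤ 1/8
  have hlD : |lam| * D ≤ 1 / 8 := by
    set M : ℝ := max (colSumNorm A) (rowSumNorm A) with hM
    have hDM : D ≤ 2 * M := by
      rw [hD, hM]
      have h1 : rowSumNorm A ≤ M := le_max_right _ _
      have h2 : colSumNorm A ≤ M := le_max_left _ _
      linarith
    rcases le_or_gt M 0 with hM0 | hM0
    · have hr : rowSumNorm A = 0 := le_antisymm (le_trans (le_max_right _ _) hM0) hrow0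
      have hc : colSumNorm A = 0 := le_antisymm (le_trans (le_max_left _ _) hM0) hcol0
      rw [hD, hr, hc]
      norm_num
    · have h1 : |lam| * D ≤ |lam| * (2 * M) :=
        mul_le_mul_of_nonneg_left hDM (abs_nonneg lam)
      have h2 : |lam| * (2 * M) ≤ (1 / (16 * M)) * (2 * M) :=
        mul_le_mul_of_nonneg_right hlam (by linarith)
      have h3 : (1 / (16 * M)) * (2 * M) = 1 / 8 := by
        field_simp
        ring
      rw [h3] at h2
      exact le_trans h1 h2
  -- the compensator
  set c : ℝ := ∫ ω', (∑ i, ∑ j, A i j * ξ i ω' * ξ j ω') ∂μ with hc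
  have hcval : c = ∑ i, ∑ j, A i j * p i * p j := by
    rw [hc]
    exact EZ hmeas hval hp0 hprob hindep (fun i j => A i j) hdiag
  -- pointwise identification with the boolean function
  set G : (Fin m → Bool) → ℝ := fun x =>
    Real.exp (lam * ((∑ i, ∑ j, A i j * bval (x i) * bval (x j)) - c)) with hG
  have hbv : ∀ i ω, bval (decide (ξ i ω = 1)) = ξ i ω := by
    intro i ω
    rcases hval i ω with h | h
    · have hd : decide (ξ i ω = 1) = false := decide_eq_false (by rw [h]; norm_num)
      rw [hd, h]; rfl
    · have hd : decide (ξ i ω = 1) = true := decide_eq_true h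
      rw [hd, h]; rfl
  have hpt : (fun ω => Real.exp (lam * ((∑ i, ∑ j, A i j * ξ i ω * ξ j ω) - c)))
      = fun ω => G (fun i => decide (ξ i ω = 1)) := by
    funext ω
    have hsum : (∑ i, ∑ j, A i j * ξ i ω * ξ j ω)
        = ∑ i, ∑ j, A i j * bval (decide (ξ i ω = 1)) * bval (decide (ξ j ω = 1)) := by
      apply Finset.sum_congr rfl; intro i _
      apply Finset.sum_congr rfl; intro j _
      rw [hbv i ω, hbv j ω]
    rw [hG, hsum]
  -- turn the integral into a finite sum
  have hLHS : (∫ ω, Real.exp (lam * ((∑ i, ∑ j, A i j * ξ i ω * ξ j ω) - c)) ∂μ)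
      = Es p Finset.univ G := by
    rw [hpt, integral_eq_sum hmeas hval hp0 hp1 hprob hindep G, Es_univ]
  rw [hLHS]
  -- identify G with the canonical form of main_ind
  have hGe : Es p Finset.univ G
      = Es p Finset.univ (fun x => Real.exp (lam *
          ((∑ i, ∑ j, A i j * bval (x i) * bval (x j))
            + (∑ j, (0:ℝ) * bval (x j))
            - ((∑ i, ∑ j, A i j * p i * p j) + ∑ j, (0:ℝ) * p j))
          + ∑ j, (0:ℝ) * bval (x j))) := by
    apply congrArg
    funext x
    simp only [hG, zero_mul, Finset.sum_const_zero, add_zero]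
    rw [hcval]
  rw [hGe]
  have hmain := main_ind (fun i j => A i j) p lam D hp0 hp1 hdiag hb hlD hD0
    Finset.univ (fun _ => 0) (fun _ => 0)
    (fun j => le_refl 0)
    (fun j => by simp)
    (fun j => by simp)
  refine le_trans hmain ?_
  rw [Real.exp_le_exp]
  -- final budget arithmetic
  set T : ℝ := ∑ i, ∑ j, |A i j| * p i * p j with hT
  have hT0 : 0 ≤ T := by
    rw [hT]
    apply Finset.sum_nonneg; intro i _
    apply Finset.sum_nonneg; intro j _
    exact mul_nonneg (mul_nonneg (abs_nonneg _) (hp0 i)) (hp0 j)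
  have hS : (∑ i, ∑ j, if i = j then (0:ℝ) else |A i j| * p i * p j) = T := by
    rw [hT]
    apply Finset.sum_congr rfl; intro i _
    apply Finset.sum_congr rfl; intro j _
    by_cases hij : i = j
    · subst hij; simp [hdiag i]
    · rw [if_neg hij]
  rw [hS]
  have hX : (∑ j, p j * ∑ k, p k * |A k j + A j k|) ≤ 2 * T := by
    have step1 : (∑ j, p j * ∑ k, p k * |A k j + A j k|)
        ≤ ∑ j, ∑ k, (p j * p k * |A k j| + p j * p k * |A j k|) := by
      apply Finset.sum_le_sum; intro j _
      rw [Finset.mul_sum]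
      apply Finset.sum_le_sum; intro k _
      have habs : |A k j + A j k| ≤ |A k j| + |A j k| := abs_add_le _ _
      have hpjk : 0 ≤ p j * p k := mul_nonneg (hp0 j) (hp0 k)
      calc p j * (p k * |A k j + A j k|) = (p j * p k) * |A k j + A j k| := by ring
        _ ≤ (p j * p k) * (|A k j| + |A j k|) := mul_le_mul_of_nonneg_left habs hpjk
        _ = p j * p k * |A k j| + p j * p k * |A j k| := by ring
    have step2 : (∑ j, ∑ k, (p j * p k * |A k j| + p j * p k * |A j k|)) = 2 * T := by
      rw [hT]
      have e1 : (∑ j, ∑ k : Fin m, p j * p k * |A k j|) = ∑ i, ∑ j, |A i j| * p i * p j := by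
        rw [Finset.sum_comm]
        apply Finset.sum_congr rfl; intro k _
        apply Finset.sum_congr rfl; intro j _
        ring
      have e2 : (∑ j, ∑ k : Fin m, p j * p k * |A j k|) = ∑ i, ∑ j, |A i j| * p i * p j := by
        apply Finset.sum_congr rfl; intro j _
        apply Finset.sum_congr rfl; intro k _
        ring
      calc (∑ j, ∑ k, (p j * p k * |A k j| + p j * p k * |A j k|))
          = (∑ j, ∑ k : Fin m, p j * p k * |A k j|)
            + ∑ j, ∑ k : Fin m, p j * p k * |A j k| := by
            rw [← Finset.sum_add_distrib]
            apply Finset.sum_congr rfl; intro j _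
            rw [← Finset.sum_add_distrib]
        _ = 2 * ∑ i, ∑ j, |A i j| * p i * p j := by rw [e1, e2]; ring
    linarith [step1, step2]
  have he1 : (1:ℝ) ≤ Real.exp (8 * |lam| * D) := by
    apply Real.one_le_exp
    have : 0 ≤ |lam| * D := mul_nonneg (abs_nonneg lam) hD0
    linarith
  have hl2D : 0 ≤ lam ^ 2 * D := mul_nonneg (sq_nonneg lam) hD0
  have h5 : 5 * lam ^ 2 * D * (∑ j, p j * ∑ k, p k * |A k j + A j k|)
      ≤ 5 * lam ^ 2 * D * (2 * T) := by
    have h50 : (0:ℝ) ≤ 5 * lam ^ 2 * D := by linarith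
    exact mul_le_mul_of_nonneg_left hX h50
  have h6 : 10 * (lam ^ 2 * D * T) ≤ 36.5 * lam ^ 2 * D * Real.exp (8 * |lam| * D) * T := by
    have hbase : 0 ≤ lam ^ 2 * D * T := mul_nonneg hl2D hT0
    nlinarith [mul_nonneg hbase (by linarith : (0:ℝ) ≤ 36.5 * Real.exp (8 * |lam| * D) - 10)]
  calc 5 * lam ^ 2 * D * (∑ j, p j * ∑ k, p k * |A k j + A j k|)
      ≤ 5 * lam ^ 2 * D * (2 * T) := h5
    _ = 10 * (lam ^ 2 * D * T) := by ring
    _ ≤ 36.5 * lam ^ 2 * D * Real.exp (8 * |lam| * D) * T := h6
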